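/- If 0 < M < 1, then the matrix A_M = !![1, −2√M; 2√M, 1 − 4M] (the Jacobian matrix of H_M ∘ H_M at the 2-periodic point p₁) has two nonreal complex-conjugate eigenvalues e^{iφ} and e^{−iφ} of modulus 1, where φ ∈ (0, π) is determined by cos φ = 1 − 2M; that is, the 2-periodic orbit {p₁, p₂} of H_M is elliptic for all 0 < M < 1. -/

import Mathlib

open Complex

/-- `z` is an eigenvalue of the complex `2 × 2` matrix `A`. -/
def IsEigenvalueC (A : Matrix (Fin 2) (Fin 2) ℂ) (z : ℂ) : Prop :=
  ∃ v : Fin 2 → ℂ, v ≠ 0 ∧ A.mulVec v = z • v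

/-- The Jacobian matrix of `H_M ∘ H_M` at the 2-periodic point `p₁ = (−√M, √M)`,
viewed as a complex matrix: `!![1, −2√M; 2√M, 1 − 4M]`. -/
noncomputable def henonNIterJac (M : ℝ) : Matrix (Fin 2) (Fin 2) ℂ :=
  !![1, -2 * (Real.sqrt M : ℂ); 2 * (Real.sqrt M : ℂ), 1 - 4 * (M : ℂ)]

lemma eig_of_quad {M : ℝ} (hM0 : 0 < M) {z : ℂ}
    (hz : z ^ 2 - (2 - 4 * (M : ℂ)) * z + 1 = 0) :
    IsEigenvalueC (henonNIterJac M) z := by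
  refine ⟨![2 * (Real.sqrt M : ℂ), 1 - z], ?_, ?_⟩
  · intro h
    have h0 := congrFun h 0
    simp at h0
    have : Real.sqrt M ≠ 0 := by positivity
    exact this (by exact_mod_cast h0)
  · funext i
    have hMs : ((Real.sqrt M : ℂ)) ^ 2 = (M : ℂ) := by
      norm_cast; exact Real.sq_sqrt hM0.le
    fin_cases i
    · simp [henonNIterJac, Matrix.mulVec, dotProduct, Fin.sum_univ_two]
      ring
    · simp [henonNIterJac, Matrix.mulVec, dotProduct, Fin.sum_univ_two]
      linear_combination hz + 4 * hMs

theorem henonN_two_periodic_orbit_elliptic {M : ℝ} (hM0 : 0 < M) (hM1 : M < 1) :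
    ∃ φ : ℝ, φ ∈ Set.Ioo 0 Real.pi ∧ Real.cos φ = 1 - 2 * M ∧
      (Complex.exp (φ * I)).im ≠ 0 ∧
      ‖Complex.exp (φ * I)‖ = 1 ∧
      Complex.exp (-(φ : ℂ) * I) = (starRingEnd ℂ) (Complex.exp (φ * I)) ∧
      IsEigenvalueC (henonNIterJac M) (Complex.exp (φ * I)) ∧
      IsEigenvalueC (henonNIterJac M) (Complex.exp (-(φ : ℂ) * I)) := by
  set φ := Real.arccos (1 - 2 * M) with hφdef
  have h1 : (-1 : ℝ) ≤ 1 - 2 * M := by linarith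
  have h2 : 1 - 2 * M ≤ 1 := by linarith
  have hcos : Real.cos φ = 1 - 2 * M := Real.cos_arccos h1 h2
  have hφ0 : 0 < φ := Real.arccos_pos.mpr (by linarith)
  have hφπ : φ < Real.pi := by
    refine lt_of_le_of_ne (Real.arccos_le_pi _) fun h => ?_
    rw [h, Real.cos_pi] at hcos
    linarith
  have hsin : 0 < Real.sin φ := Real.sin_pos_of_pos_of_lt_pi hφ0 hφπ
  -- the quadratic identity
  have hsum : Complex.exp (φ * I) + Complex.exp (-(φ : ℂ) * I) = 2 - 4 * (M : ℂ) := by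
    have : Complex.cos φ = (Complex.exp (φ * I) + Complex.exp (-(φ : ℂ) * I)) / 2 := by
      rw [Complex.cos]
    have hc : (Complex.cos φ : ℂ) = ((1 - 2 * M : ℝ) : ℂ) := by
      rw [← Complex.ofReal_cos, hcos]
    rw [hc] at this
    push_cast at this
    linear_combination 2 * this.symm
  have hprod : Complex.exp (φ * I) * Complex.exp (-(φ : ℂ) * I) = 1 := by
    rw [← Complex.exp_add]; ring_nf; exact Complex.exp_zero
  have hq1 : Complex.exp (φ * I) ^ 2 - (2 - 4 * (M : ℂ)) * Complex.exp (φ * I) + 1 = 0 := by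
    rw [← hsum, ← hprod]; ring
  have hq2 : Complex.exp (-(φ : ℂ) * I) ^ 2 - (2 - 4 * (M : ℂ)) * Complex.exp (-(φ : ℂ) * I) + 1 = 0 := by
    rw [← hsum, ← hprod]; ring
  refine ⟨φ, ⟨hφ0, hφπ⟩, hcos, ?_, ?_, ?_, eig_of_quad hM0 hq1, eig_of_quad hM0 hq2⟩
  · rw [Complex.exp_ofReal_mul_I_im]; exact ne_of_gt hsin
  · exact Complex.norm_exp_ofReal_mul_I φ
  · rw [← Complex.exp_conj]; congr 1; simp
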